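/- Let E be the infinite EES consisting of one isolated event labelled a together with countably many disjoint two-event chains a < b; and let F be the infinite EES consisting of countably many disjoint two-event chains a < b. Then E and F are pomset trace equivalent but not interleaving bisimilar. -/

import Mathlib

/-- A labelled prime event structure over alphabet `A`. -/
structure PES (A : Type*) where
  E : Type*
  le : E → E → Prop
  conflict : E → E → Prop
  lab : E → A
  le_refl : ∀ e, le e e
  le_trans : ∀ e e' e'', le e e' → le e' e'' → le e e''
  le_antisymm : ∀ e e', le e e' → le e' e → e = e'
  finite_past : ∀ e, Set.Finite {e' | le e' e ∧ e' ≠ e}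
  conflict_irrefl : ∀ e, ¬ conflict e e
  conflict_symm : ∀ e e', conflict e e' → conflict e' e
  conflict_inherit : ∀ e e' e'', le e e' → e ≠ e' → conflict e e'' → conflict e' e''

namespace PES

variable {A : Type*}

/-- A coherence space: a PES with empty (strict) causality. -/
def IsCS (P : PES A) : Prop := ∀ e e', P.le e e' → e = e'

/-- An elementary event structure: a PES with empty conflict. -/
def IsEES (P : PES A) : Prop := ∀ e e', ¬ P.conflict e e'

/-- Concurrency. -/
def co (P : PES A) (e e' : P.E) : Prop :=
  ¬ P.le e e' ∧ ¬ P.le e' e ∧ ¬ P.conflict e e'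

/-- Configurations: finite, conflict-free, downward-closed sets of events. -/
def Config (P : PES A) (X : Set P.E) : Prop :=
  X.Finite ∧ (∀ e ∈ X, ∀ e' ∈ X, ¬ P.conflict e e') ∧
    (∀ e ∈ X, ∀ e', P.le e' e → e' ∈ X)

/-- Single-event labelled transition between configurations. -/
def Trans (P : PES A) (X : Set P.E) (a : A) (X' : Set P.E) : Prop :=
  P.Config X ∧ P.Config X' ∧ ∃ e, e ∉ X ∧ X' = insert e X ∧ P.lab e = a

/-- `X` can perform the sequential trace `w`. -/
def TraceFrom (P : PES A) : Set P.E → List A → Prop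
  | X, [] => P.Config X
  | X, a :: w => ∃ X', P.Trans X a X' ∧ P.TraceFrom X' w

/-- Sequential traces of a PES. -/
def STr (P : PES A) (w : List A) : Prop := P.TraceFrom ∅ w

/-- Interleaving trace equivalence. -/
def ITrEq (P Q : PES A) : Prop := ∀ w : List A, P.STr w ↔ Q.STr w

/-- Interleaving bisimulation. -/
def IBisim (P Q : PES A) (R : Set P.E → Set Q.E → Prop) : Prop :=
  R ∅ ∅ ∧ ∀ X Y, R X Y →
    (∀ a X', P.Trans X a X' → ∃ Y', Q.Trans Y a Y' ∧ R X' Y') ∧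
    (∀ a Y', Q.Trans Y a Y' → ∃ X', P.Trans X a X' ∧ R X' Y')

/-- Interleaving bisimilarity. -/
def IBisimilar (P Q : PES A) : Prop := ∃ R, IBisim P Q R

/-- Step transition, labelled by the multiset of labels of a nonempty set of
pairwise concurrent events added at once. -/
def StepTrans (P : PES A) (X : Set P.E) (m : Multiset A) (X' : Set P.E) : Prop :=
  P.Config X ∧ P.Config X' ∧ X ⊆ X' ∧ ∃ G : Finset P.E, ↑G = X' \ X ∧ G.Nonempty ∧
    (∀ e ∈ G, ∀ e' ∈ G, e ≠ e' → P.co e e') ∧ Multiset.map P.lab G.val = m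

/-- `X` can perform the step trace `s`. -/
def StepTraceFrom (P : PES A) : Set P.E → List (Multiset A) → Prop
  | X, [] => P.Config X
  | X, m :: s => ∃ X', P.StepTrans X m X' ∧ P.StepTraceFrom X' s

/-- Step traces of a PES. -/
def StTr (P : PES A) (s : List (Multiset A)) : Prop := P.StepTraceFrom ∅ s

/-- Step trace equivalence. -/
def STrEq (P Q : PES A) : Prop := ∀ s : List (Multiset A), P.StTr s ↔ Q.StTr s

/-- Step bisimulation. -/
def SBisim (P Q : PES A) (R : Set P.E → Set Q.E → Prop) : Prop :=
  R ∅ ∅ ∧ ∀ X Y, R X Y →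
    (∀ m X', P.StepTrans X m X' → ∃ Y', Q.StepTrans Y m Y' ∧ R X' Y') ∧
    (∀ m Y', Q.StepTrans Y m Y' → ∃ X', P.StepTrans X m X' ∧ R X' Y')

/-- Step bisimilarity. -/
def SBisimilar (P Q : PES A) : Prop := ∃ R, SBisim P Q R

/-- `f` restricts to a label-preserving order-isomorphism from `X` onto `Y`. -/
def IsoOn (P Q : PES A) (f : P.E → Q.E) (X : Set P.E) (Y : Set Q.E) : Prop :=
  Set.BijOn f X Y ∧ (∀ e ∈ X, ∀ e' ∈ X, (P.le e e' ↔ Q.le (f e) (f e'))) ∧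
    ∀ e ∈ X, Q.lab (f e) = P.lab e

/-- The labelled posets induced by `X` and `Y` are isomorphic (same pomset). -/
def PIso (P Q : PES A) (X : Set P.E) (Y : Set Q.E) : Prop :=
  ∃ f, IsoOn P Q f X Y

/-- Pomset trace equivalence: same sets of pomsets of configurations. -/
def PTrEq (P Q : PES A) : Prop :=
  (∀ X, P.Config X → ∃ Y, Q.Config Y ∧ PIso P Q X Y) ∧
  (∀ Y, Q.Config Y → ∃ X, P.Config X ∧ PIso P Q X Y)

/-- Pomset transition: strictly extending a configuration. -/
def PomTrans (P : PES A) (X X' : Set P.E) : Prop :=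
  P.Config X ∧ P.Config X' ∧ X ⊂ X'

/-- Pomset bisimulation: matched extensions must add isomorphic pomsets. -/
def PBisim (P Q : PES A) (R : Set P.E → Set Q.E → Prop) : Prop :=
  R ∅ ∅ ∧ ∀ X Y, R X Y →
    (∀ X', P.PomTrans X X' →
      ∃ Y', Q.PomTrans Y Y' ∧ PIso P Q (X' \ X) (Y' \ Y) ∧ R X' Y') ∧
    (∀ Y', Q.PomTrans Y Y' →
      ∃ X', P.PomTrans X X' ∧ PIso P Q (X' \ X) (Y' \ Y) ∧ R X' Y')

/-- Pomset bisimilarity. -/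
def PBisimilar (P Q : PES A) : Prop := ∃ R, PBisim P Q R

/-- Weak history preserving bisimulation. -/
def WHBisim (P Q : PES A) (R : Set P.E → Set Q.E → Prop) : Prop :=
  R ∅ ∅ ∧ ∀ X Y, R X Y → PIso P Q X Y ∧
    (∀ a X', P.Trans X a X' → ∃ Y', Q.Trans Y a Y' ∧ R X' Y') ∧
    (∀ a Y', Q.Trans Y a Y' → ∃ X', P.Trans X a X' ∧ R X' Y')

/-- Weak history preserving bisimilarity. -/
def WHBisimilar (P Q : PES A) : Prop := ∃ R, WHBisim P Q R

/-- History preserving bisimulation: triples `(X, Y, f)`. -/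
def HBisim (P Q : PES A) (R : Set P.E → Set Q.E → (P.E → Q.E) → Prop) : Prop :=
  (∃ f, R ∅ ∅ f) ∧ ∀ X Y f, R X Y f → IsoOn P Q f X Y ∧
    (∀ a X', P.Trans X a X' →
      ∃ Y' f', Q.Trans Y a Y' ∧ R X' Y' f' ∧ ∀ e ∈ X, f' e = f e) ∧
    (∀ a Y', Q.Trans Y a Y' →
      ∃ X' f', P.Trans X a X' ∧ R X' Y' f' ∧ ∀ e ∈ X, f' e = f e)

/-- History preserving bisimilarity. -/
def HBisimilar (P Q : PES A) : Prop := ∃ R, HBisim P Q R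

/-- Closure under backward transitions, as needed for hereditary hp-bisimulations. -/
def Hereditary (P Q : PES A) (R : Set P.E → Set Q.E → (P.E → Q.E) → Prop) : Prop :=
  ∀ X Y f, R X Y f →
    (∀ a X', P.Trans X' a X → R X' (f '' X') f) ∧
    (∀ a Y', Q.Trans Y' a Y → R {e ∈ X | f e ∈ Y'} Y' f)

/-- Hereditary history preserving bisimilarity. -/
def HHBisimilar (P Q : PES A) : Prop := ∃ R, HBisim P Q R ∧ Hereditary P Q R

/-- Isomorphism of PESs. -/
def Iso (P Q : PES A) : Prop :=
  ∃ f : P.E ≃ Q.E, (∀ e e', P.le e e' ↔ Q.le (f e) (f e')) ∧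
    (∀ e e', P.conflict e e' ↔ Q.conflict (f e) (f e')) ∧
    ∀ e, Q.lab (f e) = P.lab e

end PES


/-- One isolated `a` together with countably many disjoint chains `a < b`
(`a := false`, `b := true`). -/
def eesIsoPlus : PES Bool where
  E := Unit ⊕ (ℕ × Bool)
  le x y := x = y ∨ (∃ n, x = Sum.inr (n, false) ∧ y = Sum.inr (n, true))
  conflict _ _ := False
  lab x := match x with | Sum.inl _ => false | Sum.inr (_, c) => c
  le_refl _ := Or.inl rfl
  le_trans := by
    rintro x y z (rfl | ⟨n, rfl, rfl⟩) h'
    · exact h'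
    · rcases h' with rfl | ⟨m, hm, rfl⟩
      · exact Or.inr ⟨n, rfl, rfl⟩
      · simp at hm
  le_antisymm := by
    rintro x y (rfl | ⟨n, rfl, rfl⟩) h'
    · rfl
    · rcases h' with h' | ⟨m, hm1, hm2⟩ <;> simp_all
  finite_past e := by
    apply Set.Subsingleton.finite
    rintro x ⟨(rfl | ⟨m, rfl, rfl⟩), hx⟩
    · exact absurd rfl hx
    · rintro y ⟨(rfl | ⟨k, rfl, hk⟩), hy⟩
      · exact absurd rfl hy
      · simp only [Sum.inr.injEq, Prod.mk.injEq] at hk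
        simp [hk.1]
  conflict_irrefl _ h := h
  conflict_symm _ _ h := h
  conflict_inherit _ _ _ _ _ h := h

/-- Countably many disjoint chains `a < b` (`a := false`, `b := true`). -/
def eesChains : PES Bool where
  E := ℕ × Bool
  le x y := x = y ∨ (x.2 = false ∧ y.2 = true ∧ x.1 = y.1)
  conflict _ _ := False
  lab x := x.2
  le_refl _ := Or.inl rfl
  le_trans := by
    rintro x y z (rfl | ⟨h1, h2, h3⟩) h'
    · exact h'
    · rcases h' with rfl | ⟨h4, h5, h6⟩
      · exact Or.inr ⟨h1, h2, h3⟩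
      · simp_all
  le_antisymm := by
    rintro x y (rfl | ⟨h1, h2, h3⟩) h'
    · rfl
    · rcases h' with rfl | ⟨h4, h5, h6⟩
      · rfl
      · simp_all
  finite_past e := by
    apply Set.Subsingleton.finite
    rintro x ⟨(rfl | ⟨h1, h2, h3⟩), hx⟩
    · exact absurd rfl hx
    · rintro y ⟨(rfl | ⟨h4, h5, h6⟩), hy⟩
      · exact absurd rfl hy
      · exact Prod.ext (h3.trans h6.symm) (h1.trans h4.symm)
  conflict_irrefl _ h := h
  conflict_symm _ _ h := h
  conflict_inherit _ _ _ _ _ h := h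

lemma eesIsoPlus_le_iff (x y : eesIsoPlus.E) :
    eesIsoPlus.le x y ↔ x = y ∨ ∃ n, x = Sum.inr (n, false) ∧ y = Sum.inr (n, true) :=
  Iff.rfl

lemma eesChains_le_iff (x y : eesChains.E) :
    eesChains.le x y ↔ x = y ∨ (x.2 = false ∧ y.2 = true ∧ x.1 = y.1) :=
  Iff.rfl

lemma le_iso_inr (p q : ℕ × Bool) :
    eesIsoPlus.le (Sum.inr p) (Sum.inr q) ↔ eesChains.le p q := by
  obtain ⟨m, c⟩ := p; obtain ⟨m', c'⟩ := q
  show (_ ∨ _) ↔ (_ ∨ _)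
  constructor
  · rintro (h | ⟨n, h1, h2⟩)
    · exact Or.inl (Sum.inr_injective h)
    · have h1' := Sum.inr_injective h1
      have h2' := Sum.inr_injective h2
      injection h1' with ha hb
      injection h2' with hc hd
      exact Or.inr ⟨hb, hd, ha.trans hc.symm⟩
  · rintro (h | ⟨h1, h2, h3⟩)
    · exact Or.inl (congrArg Sum.inr h)
    · simp only at h1 h2 h3
      subst h1 h2 h3
      exact Or.inr ⟨m, rfl, rfl⟩

lemma PTrEq_iso_chains : PES.PTrEq eesIsoPlus eesChains := by
  constructor
  · -- forward: configurations of eesIsoPlus have matching pomsets in eesChains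
    rintro X ⟨hXfin, -, hXdc⟩
    obtain ⟨N, hN⟩ :=
      ((hXfin.image (Sum.elim (fun _ => (0 : ℕ)) Prod.fst)).infinite_compl).nonempty
    have hfresh : ∀ p : ℕ × Bool, Sum.inr p ∈ X → p.1 ≠ N := by
      intro p hp h
      exact hN ⟨Sum.inr p, hp, h⟩
    set f : eesIsoPlus.E → eesChains.E := Sum.elim (fun _ => (N, false)) id with hf
    have hfinj : Set.InjOn f X := by
      rintro (⟨⟩ | p) he (⟨⟩ | q) he' heq
      · rfl
      · exfalso
        have : q = (N, false) := heq.symm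
        exact hfresh q he' (by simp [this])
      · exfalso
        have : p = (N, false) := heq
        exact hfresh p he (by simp [this])
      · exact congrArg Sum.inr (show p = q from heq)
    have hYconf : eesChains.Config (f '' X) := by
      refine ⟨hXfin.image f, fun _ _ _ _ h => h, ?_⟩
      rintro q ⟨e, heX, rfl⟩ q' hle
      rcases (eesChains_le_iff q' (f e)).1 hle with rfl | ⟨h1, h2, h3⟩
      · exact ⟨e, heX, rfl⟩
      · -- f e has label true, so e is a Sum.inr with second component true
        rcases e with ⟨⟩ | ⟨m, c⟩
        · exact absurd h2 Bool.false_ne_true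
        · simp only [hf, Sum.elim_inr, id_eq] at h2 h3 ⊢
          have hc : c = true := h2
          have hq' : q' = (m, false) := by
            obtain ⟨a, b⟩ := q'
            simp only at h1 h3
            simp [h1, h3]
            rfl
          have : Sum.inr (m, false) ∈ X := by
            apply hXdc _ heX
            refine (eesIsoPlus_le_iff _ _).2 ?_
            exact Or.inr ⟨m, rfl, by rw [hc]⟩
          exact ⟨Sum.inr (m, false), this, by subst hq'; rfl⟩
    refine ⟨f '' X, hYconf, f, ⟨Set.mapsTo_image f X, hfinj, Set.surjOn_image f X⟩, ?_, ?_⟩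
    · rintro e he e' he'
      rcases e with ⟨⟩ | p
      · rcases e' with ⟨⟩ | q
        · constructor <;> intro _ <;> exact Or.inl rfl
        · constructor
          · rintro (h | ⟨n, h1, -⟩) <;> simp_all
          · rintro h
            rcases (eesChains_le_iff _ _).1 h with h | ⟨h1, h2, h3⟩
            · exfalso
              exact hfresh q he' (by rw [← show ((N, false) : ℕ × Bool) = q from h])
            · exfalso
              simp only [hf, Sum.elim_inl, Sum.elim_inr, id_eq] at h3
              exact hfresh q he' h3.symm
      · rcases e' with ⟨⟩ | q
        · constructor
          · rintro (h | ⟨n, -, h2⟩) <;> simp_all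
          · rintro h
            rcases (eesChains_le_iff _ _).1 h with h | ⟨h1, h2, h3⟩
            · exfalso
              exact hfresh p he (by rw [show p = ((N, false) : ℕ × Bool) from h])
            · exfalso
              exact Bool.false_ne_true h2
        · exact le_iso_inr p q
    · rintro (⟨⟩ | p) he
      · rfl
      · rfl
  · -- backward: configurations of eesChains embed via Sum.inr
    rintro Y ⟨hYfin, -, hYdc⟩
    have hXconf : eesIsoPlus.Config (Sum.inr '' Y) := by
      refine ⟨hYfin.image _, fun _ _ _ _ h => h, ?_⟩
      rintro e ⟨q, hq, rfl⟩ e' hle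
      rcases (eesIsoPlus_le_iff e' (Sum.inr q)).1 hle with rfl | ⟨n, rfl, h2⟩
      · exact ⟨q, hq, rfl⟩
      · have hq' : q = (n, true) := Sum.inr_injective h2
        subst hq'
        have : (n, false) ∈ Y := by
          apply hYdc _ hq
          refine (eesChains_le_iff _ _).2 ?_
          exact Or.inr ⟨rfl, rfl, rfl⟩
        exact ⟨(n, false), this, rfl⟩
    refine ⟨Sum.inr '' Y, hXconf, Sum.elim (fun _ => ((0 : ℕ), false)) id, ?_, ?_, ?_⟩
    · refine ⟨?_, ?_, ?_⟩
      · rintro e ⟨q, hq, rfl⟩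
        exact hq
      · rintro e ⟨p, hp, rfl⟩ e' ⟨q, hq, rfl⟩ heq
        exact congrArg Sum.inr (show p = q from heq)
      · intro q hq
        exact ⟨Sum.inr q, ⟨q, hq, rfl⟩, rfl⟩
    · rintro e ⟨p, hp, rfl⟩ e' ⟨q, hq, rfl⟩
      exact le_iso_inr p q
    · rintro e ⟨q, hq, rfl⟩
      rfl

lemma not_IBisimilar_iso_chains : ¬ PES.IBisimilar eesIsoPlus eesChains := by
  rintro ⟨R, hR0, hR⟩
  have hC0i : eesIsoPlus.Config ∅ := ⟨Set.finite_empty, by simp, by simp⟩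
  have hCsingle : eesIsoPlus.Config {Sum.inl ()} := by
    refine ⟨Set.finite_singleton _, fun _ _ _ _ h => h, ?_⟩
    rintro e he e' hle
    replace he : e = Sum.inl () := he
    subst he
    rcases (eesIsoPlus_le_iff _ _).1 hle with rfl | ⟨n, -, h2⟩
    · rfl
    · exact absurd h2 (by simp)
  have t1 : eesIsoPlus.Trans ∅ false {Sum.inl ()} := by
    refine ⟨hC0i, hCsingle, Sum.inl (), Set.notMem_empty _, Set.ext fun _ => ⟨Or.inl, fun h => h.elim id False.elim⟩, rfl⟩
  obtain ⟨Y, hTY, hRY⟩ := (hR ∅ ∅ hR0).1 false _ t1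
  obtain ⟨-, hCY, e, heY, rfl, hlabe⟩ := hTY
  obtain ⟨n, b⟩ := e
  have hb : b = false := hlabe
  subst hb
  -- from the configuration {(n, false)}, eesChains can do a `true` transition
  have hCnb : eesChains.Config (insert ((n, false) : ℕ × Bool) ∅) := hCY
  have hCnb2 : eesChains.Config (insert ((n, true) : ℕ × Bool) (insert (n, false) ∅)) := by
    refine ⟨Set.Finite.insert _ (Set.Finite.insert _ Set.finite_empty), fun _ _ _ _ h => h, ?_⟩
    intro e he e' hle
    rcases (eesChains_le_iff e' e).1 hle with rfl | ⟨h1, h2, h3⟩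
    · exact he
    · replace he : e = (n, true) ∨ e = (n, false) ∨ e ∈ (∅ : Set (ℕ × Bool)) := he
      rcases he with rfl | rfl | he
      · have he' : e' = (n, false) := Prod.ext h3 h1
        rw [he']
        exact Set.mem_insert_of_mem _ (Set.mem_insert _ _)
      · exact absurd h2 Bool.false_ne_true
      · exact absurd he (Set.notMem_empty _)
  have t2 : eesChains.Trans (insert ((n, false) : ℕ × Bool) ∅) true
      (insert ((n, true) : ℕ × Bool) (insert (n, false) ∅)) := by
    refine ⟨hCnb, hCnb2, (n, true), ?_, rfl, rfl⟩
    show ¬ ((n, true) = ((n, false) : ℕ × Bool) ∨ (n, true) ∈ (∅ : Set (ℕ × Bool)))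
    rintro (h | h)
    · exact (Bool.false_ne_true (congrArg Prod.snd h).symm)
    · exact h
  obtain ⟨X', hTX', -⟩ := (hR _ _ hRY).2 true _ t2
  obtain ⟨-, hCX', e', he'X, rfl, hlab'⟩ := hTX'
  rcases e' with ⟨⟩ | ⟨m, c⟩
  · exact Bool.false_ne_true hlab'
  · have hc : c = true := hlab'
    subst hc
    have hmem : (Sum.inr ((m, false) : ℕ × Bool) : eesIsoPlus.E) ∈
        insert (Sum.inr ((m, true) : ℕ × Bool) : eesIsoPlus.E)
          ({Sum.inl ()} : Set eesIsoPlus.E) := by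
      apply hCX'.2.2 (Sum.inr (m, true)) (Set.mem_insert _ _)
      refine (eesIsoPlus_le_iff _ _).2 ?_
      exact Or.inr ⟨m, rfl, rfl⟩
    replace hmem : (Sum.inr ((m, false) : ℕ × Bool) : Unit ⊕ ℕ × Bool) = Sum.inr (m, true) ∨
        (Sum.inr ((m, false) : ℕ × Bool) : Unit ⊕ ℕ × Bool) = Sum.inl () := hmem
    rcases hmem with h | h
    · exact Bool.false_ne_true (congrArg Prod.snd (Sum.inr_injective h))
    · cases h

theorem infinite_ees_pt_not_ib :
    PES.PTrEq eesIsoPlus eesChains ∧ ¬ PES.IBisimilar eesIsoPlus eesChains :=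
  ⟨PTrEq_iso_chains, not_IBisimilar_iso_chains⟩
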